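/- Let H be a Hopf algebra over k[q,q^{-1}] and define H~ := { a ∈ H | δ_n(a) ∈ (q-1)^n H^{⊗n} for all n ∈ ℕ }. Then H~ is a subalgebra of H: it contains 1 and is closed under multiplication. -/

import Mathlib

open TensorProduct

noncomputable section

universe u
variable (R : Type u) [CommRing R] (H : Type u) [Ring H] [HopfAlgebra R H]

/-- Right-nested tensor power `H ⊗ ⋯ ⊗ H ⊗ R`, bundled to get instances. -/
def TPowM : ℕ → ModuleCat.{u} R
  | 0 => ModuleCat.of R R
  | n+1 => ModuleCat.of R (H ⊗[R] (TPowM n))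

abbrev TPow (n : ℕ) : Type u := (TPowM R H n)

/-- Iterated coproduct `Δ^n : H → H^{⊗ n}`. -/
def Delta : ∀ n : ℕ, H →ₗ[R] TPow R H n
  | 0 => Coalgebra.counit
  | n+1 => (TensorProduct.map LinearMap.id (Delta n)) ∘ₗ Coalgebra.comul

/-- The projection `id - η ∘ ε`. -/
def projKer : H →ₗ[R] H :=
  LinearMap.id - (Algebra.linearMap R H) ∘ₗ Coalgebra.counit

/-- `(id - η∘ε)^{⊗ n}`. -/
def PMap : ∀ n : ℕ, TPow R H n →ₗ[R] TPow R H n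
  | 0 => LinearMap.id
  | n+1 => TensorProduct.map (projKer R H) (PMap n)

/-- Drinfeld's map `δ_n := (id - η∘ε)^{⊗ n} ∘ Δ^n`. -/
def ddelta (n : ℕ) : H →ₗ[R] TPow R H n := (PMap R H n) ∘ₗ (Delta R H n)

/-! ### Auxiliary machinery -/

section Aux

variable {R H}
variable {P Q N : Type u} [AddCommGroup P] [Module R P] [AddCommGroup Q] [Module R Q]
  [AddCommGroup N] [Module R N]

/-- `(x ⊗ s, u) ↦ x ⊗ f s u`. -/
def consA (f : P →ₗ[R] Q →ₗ[R] N) : (H ⊗[R] P) →ₗ[R] Q →ₗ[R] (H ⊗[R] N) :=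
  ((LinearMap.lTensorHom H) ∘ₗ f.flip).flip

@[simp] lemma consA_tmul (f : P →ₗ[R] Q →ₗ[R] N) (x : H) (s : P) (u : Q) :
    consA f (x ⊗ₜ s) u = x ⊗ₜ (f s u) := rfl

/-- `(s, y ⊗ t) ↦ y ⊗ f s t`. -/
def consB (f : P →ₗ[R] Q →ₗ[R] N) : P →ₗ[R] (H ⊗[R] Q) →ₗ[R] (H ⊗[R] N) :=
  (LinearMap.lTensorHom H) ∘ₗ f

@[simp] lemma consB_tmul (f : P →ₗ[R] Q →ₗ[R] N) (s : P) (y : H) (t : Q) :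
    consB f s (y ⊗ₜ t) = y ⊗ₜ (f s t) := rfl

/-- `(x ⊗ s, y ⊗ t) ↦ (x*y) ⊗ f s t`. -/
def consAB (f : P →ₗ[R] Q →ₗ[R] N) : (H ⊗[R] P) →ₗ[R] (H ⊗[R] Q) →ₗ[R] (H ⊗[R] N) :=
  TensorProduct.curry
    ((TensorProduct.map (LinearMap.mul' R H) (TensorProduct.lift f)) ∘ₗ
      (TensorProduct.tensorTensorTensorComm R H P H Q).toLinearMap)

@[simp] lemma consAB_tmul (f : P →ₗ[R] Q →ₗ[R] N) (x : H) (s : P) (y : H) (t : Q) :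
    consAB f (x ⊗ₜ s) (y ⊗ₜ t) = (x * y) ⊗ₜ (f s t) := by
  simp [consAB]

lemma consA_add (f g : P →ₗ[R] Q →ₗ[R] N) :
    consA (H := H) (f + g) = consA f + consA g := by
  refine LinearMap.ext fun z => LinearMap.ext fun u => ?_
  induction z using TensorProduct.induction_on with
  | zero => simp
  | tmul x s => simp [tmul_add]
  | add z w hz hw => simp_all [map_add, LinearMap.add_apply]

lemma consA_zero : consA (H := H) (0 : P →ₗ[R] Q →ₗ[R] N) = 0 := by
  refine LinearMap.ext fun z => LinearMap.ext fun u => ?_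
  induction z using TensorProduct.induction_on with
  | zero => simp
  | tmul x s => simp
  | add z w hz hw => simp_all [map_add, LinearMap.add_apply]

lemma consB_add (f g : P →ₗ[R] Q →ₗ[R] N) :
    consB (H := H) (f + g) = consB f + consB g := by
  refine LinearMap.ext fun s => LinearMap.ext fun z => ?_
  induction z using TensorProduct.induction_on with
  | zero => simp
  | tmul x t => simp [tmul_add]
  | add z w hz hw => simp_all [map_add, LinearMap.add_apply]

lemma consB_zero : consB (H := H) (0 : P →ₗ[R] Q →ₗ[R] N) = 0 := by
  refine LinearMap.ext fun s => LinearMap.ext fun z => ?_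
  induction z using TensorProduct.induction_on with
  | zero => simp
  | tmul x t => simp
  | add z w hz hw => simp_all [map_add, LinearMap.add_apply]

lemma consAB_add (f g : P →ₗ[R] Q →ₗ[R] N) :
    consAB (H := H) (f + g) = consAB f + consAB g := by
  refine LinearMap.ext fun z => LinearMap.ext fun w => ?_
  induction z using TensorProduct.induction_on with
  | zero => simp
  | tmul x s =>
      induction w using TensorProduct.induction_on with
      | zero => simp
      | tmul y t => simp [tmul_add]
      | add w₁ w₂ h₁ h₂ => simp_all [map_add, LinearMap.add_apply]
  | add z w hz hw => simp_all [map_add, LinearMap.add_apply]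

lemma consAB_zero : consAB (H := H) (0 : P →ₗ[R] Q →ₗ[R] N) = 0 := by
  refine LinearMap.ext fun z => LinearMap.ext fun w => ?_
  induction z using TensorProduct.induction_on with
  | zero => simp
  | tmul x s =>
      induction w using TensorProduct.induction_on with
      | zero => simp
      | tmul y t => simp
      | add w₁ w₂ h₁ h₂ => simp_all [map_add, LinearMap.add_apply]
  | add z w hz hw => simp_all [map_add, LinearMap.add_apply]

lemma consA_list_sum (l : List (P →ₗ[R] Q →ₗ[R] N)) :
    consA (H := H) l.sum = (l.map consA).sum := by
  induction l with
  | nil => simpa using consA_zero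
  | cons f l ih => simp [consA_add, ih]

lemma consB_list_sum (l : List (P →ₗ[R] Q →ₗ[R] N)) :
    consB (H := H) l.sum = (l.map consB).sum := by
  induction l with
  | nil => simpa using consB_zero
  | cons f l ih => simp [consB_add, ih]

lemma consAB_list_sum (l : List (P →ₗ[R] Q →ₗ[R] N)) :
    consAB (H := H) l.sum = (l.map consAB).sum := by
  induction l with
  | nil => simpa using consAB_zero
  | cons f l ih => simp [consAB_add, ih]

variable {P' Q' : Type u} [AddCommGroup P'] [Module R P'] [AddCommGroup Q'] [Module R Q']

lemma consA_compl₁₂ (f : P →ₗ[R] Q →ₗ[R] N) (g : P' →ₗ[R] P) (h : Q' →ₗ[R] Q)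
    (X : H ⊗[R] P') (u : Q') :
    consA (f.compl₁₂ g h) X u = consA f ((LinearMap.lTensor H g) X) (h u) := by
  induction X using TensorProduct.induction_on with
  | zero => simp
  | tmul x s => simp
  | add z w hz hw => simp_all [map_add, LinearMap.add_apply]

lemma consB_compl₁₂ (f : P →ₗ[R] Q →ₗ[R] N) (g : P' →ₗ[R] P) (h : Q' →ₗ[R] Q)
    (s : P') (Y : H ⊗[R] Q') :
    consB (f.compl₁₂ g h) s Y = consB f (g s) ((LinearMap.lTensor H h) Y) := by
  induction Y using TensorProduct.induction_on with
  | zero => simp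
  | tmul y t => simp
  | add z w hz hw => simp_all [map_add, LinearMap.add_apply]

lemma consAB_compl₁₂ (f : P →ₗ[R] Q →ₗ[R] N) (g : P' →ₗ[R] P) (h : Q' →ₗ[R] Q)
    (X : H ⊗[R] P') (Y : H ⊗[R] Q') :
    consAB (f.compl₁₂ g h) X Y
      = consAB f ((LinearMap.lTensor H g) X) ((LinearMap.lTensor H h) Y) := by
  induction X using TensorProduct.induction_on with
  | zero => simp
  | tmul x s =>
      induction Y using TensorProduct.induction_on with
      | zero => simp
      | tmul y t => simp
      | add w₁ w₂ h₁ h₂ => simp_all [map_add, LinearMap.add_apply]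
  | add z w hz hw => simp_all [map_add, LinearMap.add_apply]

lemma list_sum_apply₂ (l : List (P →ₗ[R] Q →ₗ[R] N)) (s : P) (u : Q) :
    l.sum s u = (l.map fun f => f s u).sum := by
  induction l with
  | nil => simp
  | cons f l ih => simp [ih]

end Aux

/-! ### Basic facts about `ddelta` -/

lemma ddelta_zero_apply (a : H) : ddelta R H 0 a = (Coalgebra.counit a : R) := rfl

lemma ddelta_succ (n : ℕ) :
    ddelta R H (n+1)
      = (TensorProduct.map (projKer R H) (ddelta R H n)) ∘ₗ Coalgebra.comul := by
  show (TensorProduct.map (projKer R H) (PMap R H n)) ∘ₗ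
      ((TensorProduct.map LinearMap.id (Delta R H n)) ∘ₗ Coalgebra.comul) = _
  rw [← LinearMap.comp_assoc, ← TensorProduct.map_comp]
  rfl

lemma ddelta_succ_apply (n : ℕ) (x : H) :
    ddelta R H (n+1) x
      = TensorProduct.map (projKer R H) (ddelta R H n) (Coalgebra.comul x) :=
  LinearMap.congr_fun (ddelta_succ R H n) x

lemma projKer_apply (u : H) :
    projKer R H u = u - (Coalgebra.counit u : R) • (1 : H) := by
  simp [projKer, Algebra.smul_def]

lemma projKer_mul (u v : H) :
    projKer R H (u * v)
      = projKer R H u * projKer R H v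
        + (Coalgebra.counit v : R) • projKer R H u
        + (Coalgebra.counit u : R) • projKer R H v := by
  simp only [projKer_apply, Bialgebra.counit_mul]
  simp only [mul_sub, sub_mul, smul_sub, smul_smul, smul_mul_assoc, mul_smul_comm,
    mul_one, one_mul, mul_comm (Coalgebra.counit v : R)]
  abel

/-- The bilinear map `(a, b) ↦ δ_n(ab)`. -/
def Bmul (n : ℕ) : H →ₗ[R] H →ₗ[R] TPow R H n :=
  (LinearMap.mul R H).compr₂ (ddelta R H n)

@[simp] lemma Bmul_apply (n : ℕ) (a b : H) : Bmul R H n a b = ddelta R H n (a * b) := rfl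

/-- Counit contraction on the first tensor factor. -/
def caMap : H ⊗[R] H →ₗ[R] H :=
  (TensorProduct.lid R H).toLinearMap ∘ₗ (LinearMap.rTensor H (Coalgebra.counit))

@[simp] lemma caMap_tmul (x y : H) :
    caMap R H (x ⊗ₜ y) = (Coalgebra.counit x : R) • y := by
  simp [caMap]

lemma caMap_comul (a : H) : caMap R H (Coalgebra.comul a) = a := by
  simp [caMap, Coalgebra.rTensor_counit_comul]

/-- Projection on the first factor. -/
def piFst : H ⊗[R] H →ₗ[R] H ⊗[R] H := LinearMap.rTensor H (projKer R H)

lemma lTensor_piFst (p : ℕ) (x : H) :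
    LinearMap.lTensor H (ddelta R H p) (piFst R H (Coalgebra.comul x)) = ddelta R H (p+1) x := by
  rw [ddelta_succ_apply, piFst, ← LinearMap.comp_apply, LinearMap.lTensor_comp_rTensor]

lemma starAux (n : ℕ) (X Y : H ⊗[R] H) :
    TensorProduct.map (projKer R H) (ddelta R H n) (X * Y)
      = consAB (Bmul R H n) (piFst R H X) (piFst R H Y)
        + consA (Bmul R H n) (piFst R H X) (caMap R H Y)
        + consB (Bmul R H n) (caMap R H X) (piFst R H Y) := by
  induction X using TensorProduct.induction_on with
  | zero => simp [map_zero, LinearMap.add_apply]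
  | tmul x₁ x₂ =>
      induction Y using TensorProduct.induction_on with
      | zero => simp [map_zero, LinearMap.add_apply]
      | tmul y₁ y₂ =>
          simp only [Algebra.TensorProduct.tmul_mul_tmul, map_tmul, piFst,
            LinearMap.rTensor_tmul, caMap_tmul, consAB_tmul, consA_tmul, consB_tmul,
            Bmul_apply, map_smul, LinearMap.map_smul, LinearMap.smul_apply]
          rw [projKer_mul]
          simp only [add_tmul, smul_tmul', tmul_smul]
      | add Y₁ Y₂ h₁ h₂ =>
          simp only [mul_add, map_add, LinearMap.add_apply, h₁, h₂]
          abel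
  | add X₁ X₂ h₁ h₂ =>
      simp only [add_mul, map_add, LinearMap.add_apply, h₁, h₂]
      abel

/-- Triples `(p, q, f)` with `f` bilinear `H^{⊗p} × H^{⊗q} → H^{⊗n}`. -/
def Tri (n : ℕ) : Type u :=
  Σ (p : ℕ) (q : ℕ), (TPow R H p →ₗ[R] TPow R H q →ₗ[R] TPow R H n)

/-- The list of terms in the expansion of `δ_n(ab)`. -/
def Lw : (n : ℕ) → List (Tri R H n)
  | 0 => [⟨0, 0, LinearMap.mul R R⟩]
  | n+1 =>
      ((Lw n).map fun t => ⟨t.1 + 1, t.2.1, consA t.2.2⟩)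
        ++ ((Lw n).map fun t => ⟨t.1, t.2.1 + 1, consB t.2.2⟩)
        ++ ((Lw n).map fun t => ⟨t.1 + 1, t.2.1 + 1, consAB t.2.2⟩)

lemma Lw_le (n : ℕ) : ∀ t ∈ Lw R H n, n ≤ t.1 + t.2.1 := by
  induction n with
  | zero => intro t ht; exact Nat.zero_le _
  | succ n ih =>
      intro t ht
      simp only [Lw, List.mem_append, List.mem_map] at ht
      rcases ht with (ht | ht) | ht <;> obtain ⟨s, hs, rfl⟩ := List.mem_map.mp ht <;>
        · have := ih s hs; dsimp only; omega

lemma key (n : ℕ) (a b : H) :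
    ddelta R H n (a * b)
      = ((Lw R H n).map fun t => t.2.2 (ddelta R H t.1 a) (ddelta R H t.2.1 b)).sum := by
  induction n generalizing a b with
  | zero =>
      show Coalgebra.counit (R := R) (A := H) (a * b) = _
      simp [Lw, ddelta_zero_apply, Bialgebra.counit_mul]
      exact (List.sum_singleton (x := Coalgebra.counit (R := R) (A := H) a * Coalgebra.counit (R := R) (A := H) b)).symm
  | succ n ih =>
      have hB : Bmul R H n
          = ((Lw R H n).map fun t =>
              (t.2.2.compl₁₂ (ddelta R H t.1) (ddelta R H t.2.1))).sum := by
        refine LinearMap.ext₂ fun x y => ?_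
        rw [Bmul_apply, ih, list_sum_apply₂, List.map_map]
        simp only [Function.comp_def, LinearMap.compl₁₂_apply]
      have hstar : ddelta R H (n+1) (a * b)
          = consAB (Bmul R H n) (piFst R H (Coalgebra.comul a)) (piFst R H (Coalgebra.comul b))
            + consA (Bmul R H n) (piFst R H (Coalgebra.comul a)) b
            + consB (Bmul R H n) a (piFst R H (Coalgebra.comul b)) := by
        have h := starAux R H n (Coalgebra.comul a) (Coalgebra.comul b)
        rw [← Bialgebra.comul_mul] at h
        rw [ddelta_succ_apply, h, caMap_comul, caMap_comul]
      have hL1 : consA (Bmul R H n) (piFst R H (Coalgebra.comul a)) b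
          = ((Lw R H n).map fun t =>
              consA t.2.2 (ddelta R H (t.1+1) a) (ddelta R H t.2.1 b)).sum := by
        rw [hB, consA_list_sum, list_sum_apply₂, List.map_map, List.map_map]
        refine congrArg List.sum (List.map_congr_left fun t ht => ?_)
        show consA (t.2.2.compl₁₂ (ddelta R H t.1) (ddelta R H t.2.1))
            (piFst R H (Coalgebra.comul a)) b = _
        rw [consA_compl₁₂, lTensor_piFst]
      have hL2 : consB (Bmul R H n) a (piFst R H (Coalgebra.comul b))
          = ((Lw R H n).map fun t =>
              consB t.2.2 (ddelta R H t.1 a) (ddelta R H (t.2.1+1) b)).sum := by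
        rw [hB, consB_list_sum, list_sum_apply₂, List.map_map, List.map_map]
        refine congrArg List.sum (List.map_congr_left fun t ht => ?_)
        show consB (t.2.2.compl₁₂ (ddelta R H t.1) (ddelta R H t.2.1))
            a (piFst R H (Coalgebra.comul b)) = _
        rw [consB_compl₁₂, lTensor_piFst]
      have hL3 : consAB (Bmul R H n) (piFst R H (Coalgebra.comul a)) (piFst R H (Coalgebra.comul b))
          = ((Lw R H n).map fun t =>
              consAB t.2.2 (ddelta R H (t.1+1) a) (ddelta R H (t.2.1+1) b)).sum := by
        rw [hB, consAB_list_sum, list_sum_apply₂, List.map_map, List.map_map]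
        refine congrArg List.sum (List.map_congr_left fun t ht => ?_)
        show consAB (t.2.2.compl₁₂ (ddelta R H t.1) (ddelta R H t.2.1))
            (piFst R H (Coalgebra.comul a)) (piFst R H (Coalgebra.comul b)) = _
        rw [consAB_compl₁₂, lTensor_piFst, lTensor_piFst]
      have hR : ((Lw R H (n+1)).map fun t =>
            t.2.2 (ddelta R H t.1 a) (ddelta R H t.2.1 b)).sum
          = ((Lw R H n).map fun t =>
              consA t.2.2 (ddelta R H (t.1+1) a) (ddelta R H t.2.1 b)).sum
            + ((Lw R H n).map fun t =>
              consB t.2.2 (ddelta R H t.1 a) (ddelta R H (t.2.1+1) b)).sum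
            + ((Lw R H n).map fun t =>
              consAB t.2.2 (ddelta R H (t.1+1) a) (ddelta R H (t.2.1+1) b)).sum := by
        rw [Lw]
        rw [List.map_append, List.map_append, List.sum_append, List.sum_append]
        erw [List.map_map, List.map_map, List.map_map]
        rfl
      rw [hstar, hL1, hL2, hL3, hR]
      abel

lemma projKer_one : projKer R H (1 : H) = 0 := by
  simp [projKer_apply, Bialgebra.counit_one]

lemma ddelta_one_succ (n : ℕ) : ddelta R H (n+1) (1 : H) = 0 := by
  rw [ddelta_succ_apply, Bialgebra.comul_one, Algebra.TensorProduct.one_def,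
    TensorProduct.map_tmul, projKer_one, TensorProduct.zero_tmul]
  rfl

theorem stmt2 (k : Type u) [Field k] [CharZero k]
    (H : Type u) [Ring H] [HopfAlgebra (LaurentPolynomial k) H] :
    ∃ S : Subalgebra (LaurentPolynomial k) H,
      (S : Set H) =
        {a : H | ∀ n : ℕ, ∃ y : TPow (LaurentPolynomial k) H n,
          ddelta (LaurentPolynomial k) H n a = ((LaurentPolynomial.T 1 - 1 : LaurentPolynomial k) ^ n) • y} := by
  set R := LaurentPolynomial k with hR
  set D : LaurentPolynomial k := LaurentPolynomial.T 1 - 1 with hD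
  have hone : ∀ n : ℕ, ∃ y : TPow R H n, ddelta R H n (1 : H) = D ^ n • y := by
    intro n
    cases n with
    | zero => exact ⟨ddelta R H 0 1, by simp⟩
    | succ m => exact ⟨0, by rw [ddelta_one_succ]; simp⟩
  refine ⟨{
    carrier := {a : H | ∀ n : ℕ, ∃ y : TPow R H n, ddelta R H n a = D ^ n • y}
    zero_mem' := fun n => ⟨0, by simp⟩
    add_mem' := by
      intro a b ha hb n
      obtain ⟨ya, hya⟩ := ha n
      obtain ⟨yb, hyb⟩ := hb n
      exact ⟨ya + yb, by rw [map_add, hya, hyb, smul_add]⟩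
    one_mem' := hone
    algebraMap_mem' := by
      intro r n
      obtain ⟨y, hy⟩ := hone n
      refine ⟨r • y, ?_⟩
      rw [Algebra.algebraMap_eq_smul_one, map_smul, hy, smul_comm]
    mul_mem' := by
      intro a b ha hb n
      rw [key]
      have hmem : ∀ x ∈ (Lw R H n).map fun t =>
          t.2.2 (ddelta R H t.1 a) (ddelta R H t.2.1 b),
          x ∈ LinearMap.range (LinearMap.lsmul R (TPow R H n) (D ^ n)) := by
        intro x hx
        obtain ⟨t, ht, rfl⟩ := List.mem_map.mp hx
        obtain ⟨u, hu⟩ := ha t.1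
        obtain ⟨v, hv⟩ := hb t.2.1
        obtain ⟨m, hm⟩ := Nat.exists_eq_add_of_le (Lw_le R H n t ht)
        refine ⟨D ^ m • t.2.2 u v, ?_⟩
        simp only [hu, hv, LinearMap.lsmul_apply, map_smul, LinearMap.smul_apply, smul_smul,
          ← pow_add]
        rw [show m + n = t.2.1 + t.1 by omega]
      obtain ⟨y, hy⟩ := LinearMap.mem_range.mp (list_sum_mem hmem)
      exact ⟨y, by rw [← hy, LinearMap.lsmul_apply]⟩
  }, rfl⟩

end
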